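/- The symmetric matrix g(y₁,y₂) = (1/(2(y₁⁴+3y₁²y₂²+y₂⁴)^(3/2))) · [[2y₁⁶+9y₁⁴y₂²+6y₁²y₂⁴+3y₂⁶, 5y₁³y₂³],[5y₁³y₂³, 3y₁⁶+6y₁⁴y₂²+9y₁²y₂⁴+2y₂⁶]] is positive definite for every (y₁,y₂) ∈ ℝ² \ {(0,0)}. -/

import Mathlib

noncomputable def g (y₁ y₂ : ℝ) : Matrix (Fin 2) (Fin 2) ℝ :=
  (1 / (2 * (y₁^4 + 3*y₁^2*y₂^2 + y₂^4) ^ ((3:ℝ)/2))) •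
    !![2*y₁^6 + 9*y₁^4*y₂^2 + 6*y₁^2*y₂^4 + 3*y₂^6, 5*y₁^3*y₂^3;
       5*y₁^3*y₂^3, 3*y₁^6 + 6*y₁^4*y₂^2 + 9*y₁^2*y₂^4 + 2*y₂^6]

lemma quad_pos (a b d p q : ℝ) (ha : 0 < a) (hdet : 0 < a*d - b^2)
    (hpq : p ≠ 0 ∨ q ≠ 0) : 0 < a*p^2 + 2*b*p*q + d*q^2 := by
  rcases eq_or_ne q 0 with hq | hq
  · subst hq
    have hp : p ≠ 0 := by tauto
    have : 0 < p^2 := pow_pos (abs_pos.mpr hp) 2 |>.trans_eq (by rw [sq_abs])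
    nlinarith
  · have hq2 : 0 < q^2 := pow_pos (abs_pos.mpr hq) 2 |>.trans_eq (by rw [sq_abs])
    nlinarith [sq_nonneg (a*p + b*q), mul_pos hdet hq2]

theorem g_posDef (y₁ y₂ : ℝ) (h : (y₁, y₂) ≠ (0, 0)) : (g y₁ y₂).PosDef := by
  have hy : y₁ ≠ 0 ∨ y₂ ≠ 0 := by
    by_contra hc
    push_neg at hc
    exact h (by simp [hc.1, hc.2])
  have hA : (0:ℝ) < y₁^4 + 3*y₁^2*y₂^2 + y₂^4 := by
    rcases hy with hy | hy <;> positivity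
  have hc : (0:ℝ) < 1 / (2 * (y₁^4 + 3*y₁^2*y₂^2 + y₂^4) ^ ((3:ℝ)/2)) := by
    positivity
  have ha : (0:ℝ) < 2*y₁^6 + 9*y₁^4*y₂^2 + 6*y₁^2*y₂^4 + 3*y₂^6 := by
    rcases hy with hy | hy <;> positivity
  have hdet : (0:ℝ) < (2*y₁^6 + 9*y₁^4*y₂^2 + 6*y₁^2*y₂^4 + 3*y₂^6) *
      (3*y₁^6 + 6*y₁^4*y₂^2 + 9*y₁^2*y₂^4 + 2*y₂^6) - (5*y₁^3*y₂^3)^2 := by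
    have heq : (2*y₁^6 + 9*y₁^4*y₂^2 + 6*y₁^2*y₂^4 + 3*y₂^6) *
        (3*y₁^6 + 6*y₁^4*y₂^2 + 9*y₁^2*y₂^4 + 2*y₂^6) - (5*y₁^3*y₂^3)^2
        = 6*y₁^12 + 39*y₁^10*y₂^2 + 90*y₁^8*y₂^4 + 105*y₁^6*y₂^6
          + 90*y₁^4*y₂^8 + 39*y₁^2*y₂^10 + 6*y₂^12 := by ring
    rw [heq]
    rcases hy with hy | hy <;> positivity
  rw [Matrix.posDef_iff_dotProduct_mulVec]
  constructor
  · unfold Matrix.IsHermitian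
    ext i j
    fin_cases i <;> fin_cases j <;> simp [g]
  · intro x hx
    have hx01 : x 0 ≠ 0 ∨ x 1 ≠ 0 := by
      by_contra hcx
      push_neg at hcx
      exact hx (by funext i; fin_cases i <;> simp [hcx.1, hcx.2])
    have hquad := quad_pos _ _ _ (x 0) (x 1) ha hdet hx01
    simp only [g, Matrix.smul_mulVec, dotProduct_smul, smul_eq_mul]
    refine mul_pos hc ?_
    simp [dotProduct, Matrix.mulVec, Fin.sum_univ_two]
    nlinarith [hquad]
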